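/- Let A_1,...,A_M be pairwise independent events in a probability space. Then (1/2)·min{1, Σ_{i=1}^M P(A_i)} ≤ P(⋃_{i=1}^M A_i) ≤ min{1, Σ_{i=1}^M P(A_i)}. -/

import Mathlib

open MeasureTheory

/-- Bonferroni-type second order lower bound (subtraction-free ENNReal form). -/
lemma bonf_aux {Ω : Type*} [MeasurableSpace Ω] (μ : Measure Ω) {M : ℕ} (A : Fin M → Set Ω)
    (hA : ∀ i, MeasurableSet (A i)) (s : Finset (Fin M)) :
    2 * ∑ i ∈ s, μ (A i) ≤ 2 * μ (⋃ i ∈ s, A i) + ∑ p ∈ s.offDiag, μ (A p.1 ∩ A p.2) := by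
  classical
  induction s using Finset.induction_on with
  | empty => simp
  | @insert a s ha ih =>
    have hUs : MeasurableSet (⋃ i ∈ s, A i) := s.measurableSet_biUnion (fun i _ => hA i)
    have hsplit : μ (⋃ i ∈ insert a s, A i) + μ (A a ∩ ⋃ i ∈ s, A i)
        = μ (A a) + μ (⋃ i ∈ s, A i) := by
      rw [Finset.set_biUnion_insert]
      exact measure_union_add_inter _ hUs
    have hinter : μ (A a ∩ ⋃ i ∈ s, A i) ≤ ∑ i ∈ s, μ (A a ∩ A i) := by
      rw [Set.inter_iUnion₂]
      exact measure_biUnion_finset_le _ _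
    have hd1 : Disjoint ({a} ×ˢ s) (s ×ˢ ({a} : Finset (Fin M))) := by
      simp only [Finset.disjoint_left, Finset.mem_product, Finset.mem_singleton]
      rintro ⟨x, y⟩ ⟨h1, h2⟩ ⟨h3, h4⟩
      exact ha (h1 ▸ h3)
    have hd2 : Disjoint s.offDiag ({a} ×ˢ s ∪ s ×ˢ ({a} : Finset (Fin M)))  := by
      simp only [Finset.disjoint_left, Finset.mem_offDiag, Finset.mem_union,
        Finset.mem_product, Finset.mem_singleton]
      rintro ⟨x, y⟩ ⟨hx, hy, _⟩ (⟨h1, _⟩ | ⟨_, h2⟩)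
      · exact ha (h1 ▸ hx)
      · exact ha (h2 ▸ hy)
    have hoff : ∑ p ∈ (insert a s).offDiag, μ (A p.1 ∩ A p.2)
        = ∑ p ∈ s.offDiag, μ (A p.1 ∩ A p.2)
          + (∑ i ∈ s, μ (A a ∩ A i) + ∑ i ∈ s, μ (A i ∩ A a)) := by
      rw [Finset.offDiag_insert ha, Finset.union_assoc, Finset.sum_union hd2,
        Finset.sum_union hd1]
      simp [Finset.sum_product, Finset.sum_product']
    have hcomm : ∑ i ∈ s, μ (A i ∩ A a) = ∑ i ∈ s, μ (A a ∩ A i) := by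
      simp [Set.inter_comm]
    calc 2 * ∑ i ∈ insert a s, μ (A i)
        = 2 * μ (A a) + 2 * ∑ i ∈ s, μ (A i) := by
          rw [Finset.sum_insert ha]; ring
      _ ≤ 2 * μ (A a) + (2 * μ (⋃ i ∈ s, A i) + ∑ p ∈ s.offDiag, μ (A p.1 ∩ A p.2)) := by
          exact add_le_add_right ih _
      _ = 2 * (μ (A a) + μ (⋃ i ∈ s, A i)) + ∑ p ∈ s.offDiag, μ (A p.1 ∩ A p.2) := by ring
      _ = 2 * (μ (⋃ i ∈ insert a s, A i) + μ (A a ∩ ⋃ i ∈ s, A i))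
            + ∑ p ∈ s.offDiag, μ (A p.1 ∩ A p.2) := by rw [hsplit]
      _ ≤ 2 * (μ (⋃ i ∈ insert a s, A i) + ∑ i ∈ s, μ (A a ∩ A i))
            + ∑ p ∈ s.offDiag, μ (A p.1 ∩ A p.2) := by
          gcongr
      _ = 2 * μ (⋃ i ∈ insert a s, A i) + ∑ p ∈ (insert a s).offDiag, μ (A p.1 ∩ A p.2) := by
          rw [hoff, hcomm]; ring

/-- Real-valued key inequality for pairwise independent events. -/
lemma key_aux {Ω : Type*} [MeasurableSpace Ω] (μ : Measure Ω) [IsProbabilityMeasure μ]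
    {M : ℕ} (A : Fin M → Set Ω) (hA : ∀ i, MeasurableSet (A i))
    (hindep : ∀ i j, i ≠ j → μ (A i ∩ A j) = μ (A i) * μ (A j)) (s : Finset (Fin M)) :
    2 * ∑ i ∈ s, (μ (A i)).toReal
      ≤ 2 * (μ (⋃ i ∈ s, A i)).toReal
        + ((∑ i ∈ s, (μ (A i)).toReal) ^ 2 - ∑ i ∈ s, (μ (A i)).toReal ^ 2) := by
  classical
  set P : Fin M → ℝ := fun i => (μ (A i)).toReal with hP
  have hoffval : ∑ p ∈ s.offDiag, μ (A p.1 ∩ A p.2)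
      = ∑ p ∈ s.offDiag, μ (A p.1) * μ (A p.2) := by
    refine Finset.sum_congr rfl fun p hp => ?_
    exact hindep p.1 p.2 (Finset.mem_offDiag.mp hp).2.2
  have hbonf := bonf_aux μ A hA s
  rw [hoffval] at hbonf
  have hfin : ∀ x : Set Ω, μ x ≠ ⊤ := fun x => measure_ne_top μ x
  have hreal : 2 * ∑ i ∈ s, P i
      ≤ 2 * (μ (⋃ i ∈ s, A i)).toReal + ∑ p ∈ s.offDiag, P p.1 * P p.2 := by
    have h1 : ((2 * ∑ i ∈ s, μ (A i)) : ENNReal).toReal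
        ≤ ((2 * μ (⋃ i ∈ s, A i) + ∑ p ∈ s.offDiag, μ (A p.1) * μ (A p.2)) : ENNReal).toReal := by
      refine ENNReal.toReal_mono ?_ hbonf
      refine ENNReal.add_ne_top.mpr ⟨?_, ?_⟩
      · exact ENNReal.mul_ne_top (by norm_num) (hfin _)
      · exact (ENNReal.sum_lt_top.mpr (fun p _ => (ENNReal.mul_lt_top
          (hfin _).lt_top (hfin _).lt_top))).ne
    rw [ENNReal.toReal_add, ENNReal.toReal_mul, ENNReal.toReal_mul,
      ENNReal.toReal_sum (fun i _ => hfin _), ENNReal.toReal_sum] at h1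
    · simp only [ENNReal.toReal_mul] at h1
      simpa using h1
    · exact fun p _ => ENNReal.mul_ne_top (hfin _) (hfin _)
    · exact ENNReal.mul_ne_top (by norm_num) (hfin _)
    · exact (ENNReal.sum_lt_top.mpr (fun p _ => (ENNReal.mul_lt_top
          (hfin _).lt_top (hfin _).lt_top))).ne
  have hsq : (∑ i ∈ s, P i) ^ 2 = ∑ i ∈ s, P i ^ 2 + ∑ p ∈ s.offDiag, P p.1 * P p.2 := by
    rw [sq, Finset.sum_mul_sum]
    rw [← Finset.sum_product', ← Finset.diag_union_offDiag s,
      Finset.sum_union (Finset.disjoint_diag_offDiag s), Finset.sum_diag]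
    simp [sq]
  have : ∑ p ∈ s.offDiag, P p.1 * P p.2 = (∑ i ∈ s, P i) ^ 2 - ∑ i ∈ s, P i ^ 2 := by
    linarith
  rw [this] at hreal
  exact hreal

/-- Truncated union bound (Shulman): for pairwise independent events `A 1, ..., A M`,
`(1/2) min{1, Σ P(A i)} ≤ P(⋃ A i) ≤ min{1, Σ P(A i)}`. -/
theorem stmt_1 {Ω : Type*} [MeasurableSpace Ω] (μ : Measure Ω) [IsProbabilityMeasure μ]
    (M : ℕ) (A : Fin M → Set Ω) (hA : ∀ i, MeasurableSet (A i))
    (hindep : ∀ i j, i ≠ j → μ (A i ∩ A j) = μ (A i) * μ (A j)) :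
    (1 / 2) * min 1 (∑ i, μ (A i)) ≤ μ (⋃ i, A i) ∧
      μ (⋃ i, A i) ≤ min 1 (∑ i, μ (A i)) := by
  classical
  have hfin : ∀ x : Set Ω, μ x ≠ ⊤ := fun x => measure_ne_top μ x
  set P : Fin M → ℝ := fun i => (μ (A i)).toReal with hP
  have hPnn : ∀ i, 0 ≤ P i := fun i => ENNReal.toReal_nonneg
  have hP1 : ∀ i, P i ≤ 1 := fun i => by
    have := prob_le_one (μ := μ) (s := A i)
    simpa [hP] using ENNReal.toReal_mono (by norm_num) this
  have hiUnion_eq : (⋃ i, A i) = ⋃ i ∈ Finset.univ, A i := by simp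
  -- upper bound
  have hub : μ (⋃ i, A i) ≤ min 1 (∑ i, μ (A i)) := by
    refine le_min prob_le_one ?_
    rw [hiUnion_eq]
    exact measure_biUnion_finset_le _ _
  refine ⟨?_, hub⟩
  -- lower bound: work in reals
  have hUmono : ∀ s : Finset (Fin M), μ (⋃ i ∈ s, A i) ≤ μ (⋃ i, A i) := fun s =>
    measure_mono (Set.iUnion₂_subset fun i _ => Set.subset_iUnion A i)
  have hkey : ∀ s : Finset (Fin M),
      2 * ∑ i ∈ s, P i - ((∑ i ∈ s, P i) ^ 2 - ∑ i ∈ s, P i ^ 2)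
        ≤ 2 * (μ (⋃ i, A i)).toReal := by
    intro s
    have h1 := key_aux μ A hA hindep s
    have h2 : (μ (⋃ i ∈ s, A i)).toReal ≤ (μ (⋃ i, A i)).toReal :=
      ENNReal.toReal_mono (hfin _) (hUmono s)
    linarith
  -- target: (1/2) * min 1 T ≤ μ U in ENNReal; convert to reals
  set S : ℝ := ∑ i, P i with hS
  have hSnn : 0 ≤ S := Finset.sum_nonneg fun i _ => hPnn i
  have hgoal_real : min 1 S / 2 ≤ (μ (⋃ i, A i)).toReal := by
    by_cases hS1 : S ≤ 1
    · -- use full index set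
      have h := hkey Finset.univ
      have hsqnn : 0 ≤ ∑ i, P i ^ 2 := Finset.sum_nonneg fun i _ => sq_nonneg _
      have : S - S ^ 2 / 2 ≤ (μ (⋃ i, A i)).toReal := by
        simp only [← hS] at h; linarith
      have h2 : min 1 S / 2 = S / 2 := by rw [min_eq_right hS1]
      rw [h2]
      nlinarith
    · push_neg at hS1
      have hmin : min 1 S = 1 := min_eq_left hS1.le
      rw [hmin]
      -- choose a minimal-cardinality subset with sum > 1
      set 𝒮 : Finset (Finset (Fin M)) :=
        Finset.univ.filter (fun t => 1 < ∑ i ∈ t, P i) with h𝒮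
      have hne : 𝒮.Nonempty := ⟨Finset.univ, by simp [h𝒮, ← hS, hS1]⟩
      obtain ⟨s, hs𝒮, hsmin⟩ := Finset.exists_min_image 𝒮 (fun t => t.card) hne
      have hs1 : 1 < ∑ i ∈ s, P i := by
        simpa [h𝒮] using hs𝒮
      have hsne : s.Nonempty := by
        rcases Finset.eq_empty_or_nonempty s with rfl | h
        · simp at hs1; linarith
        · exact h
      obtain ⟨j, hj⟩ := hsne
      set t : ℝ := ∑ i ∈ s.erase j, P i with ht
      have htsum : t + P j = ∑ i ∈ s, P i := Finset.sum_erase_add s P hj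
      have htle : t ≤ 1 := by
        by_contra h
        push_neg at h
        have hmem : s.erase j ∈ 𝒮 := by simp [h𝒮, ← ht, h]
        have := hsmin _ hmem
        have hcard : (s.erase j).card < s.card := Finset.card_erase_lt_of_mem hj
        omega
      have htp : 1 < t + P j := by rw [htsum]; exact hs1
      have htnn : 0 ≤ t := Finset.sum_nonneg fun i _ => hPnn i
      -- key inequality on s
      have h := hkey s
      have hsqlb : P j ^ 2 ≤ ∑ i ∈ s, P i ^ 2 :=
        Finset.single_le_sum (fun i _ => sq_nonneg (P i)) hj
      -- 2u ≥ 2(t+p) - ((t+p)^2 - p^2) = 2t + 2p - t^2 - 2tp ≥ 1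
      have : (1:ℝ) ≤ 2 * (μ (⋃ i, A i)).toReal := by
        rw [← htsum] at h
        have h1 : (0:ℝ) ≤ 1 - t := by linarith
        have h2 : (0:ℝ) ≤ 2 * P j - 1 + t := by linarith
        nlinarith [mul_nonneg h1 h2, hsqlb]
      linarith
  -- convert back to ENNReal
  have hTfin : (∑ i, μ (A i)) ≠ ⊤ := (ENNReal.sum_lt_top.mpr (fun i _ => (hfin _).lt_top)).ne
  have hLfin : (1 / 2 : ENNReal) * min 1 (∑ i, μ (A i)) ≠ ⊤ := by
    refine ENNReal.mul_ne_top (by norm_num) ?_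
    exact ne_top_of_le_ne_top (by norm_num) (min_le_left _ _)
  rw [← ENNReal.toReal_le_toReal hLfin (hfin _)]
  have hTS : (∑ i, μ (A i)).toReal = S := by
    rw [hS]; exact ENNReal.toReal_sum (fun i _ => hfin _)
  have hLval : ((1 / 2 : ENNReal) * min 1 (∑ i, μ (A i))).toReal = min 1 S / 2 := by
    rw [ENNReal.toReal_mul]
    have hmin : (min 1 (∑ i, μ (A i))).toReal = min 1 S := by
      rcases le_total (1 : ENNReal) (∑ i, μ (A i)) with h | h
      · rw [min_eq_left h, ENNReal.toReal_one]
        have : 1 ≤ S := by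
          rw [← hTS]
          simpa using ENNReal.toReal_mono hTfin h
        rw [min_eq_left this]
      · rw [min_eq_right h, hTS]
        have : S ≤ 1 := by
          rw [← hTS]
          simpa using ENNReal.toReal_mono (by norm_num) h
        rw [min_eq_right this]
    rw [hmin]
    norm_num
    ring
  rw [hLval]
  exact hgoal_real
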